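/- Consider n agents with additive objective valuations over M = G ∪ C in which all chores are valued identically and every chore has strictly negative value (v_i(c) = v_j(c) < 0 for all agents i, j and every chore c ∈ C). For an allocation X, let key(X) be the list of the n triples (v_i(X_i), |X_i|, i) ∈ ℤ × ℕ × ℕ sorted in increasing lexicographic order, and write A ≺⁺ B if key(A) is strictly smaller than key(B) in the lexicographic order on lists of triples. Then every allocation A that is ≺⁺-maximal (i.e., there is no allocation B with A ≺⁺ B) is EQx; equivalently, if an allocation A is not EQx, then there exists an allocation B with A ≺⁺ B. -/

import Mathlib

/-- An allocation: pairwise disjoint bundles covering all the items. -/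
def IsAllocation {ι : Type*} {n : ℕ} (A : Fin n → Finset ι) : Prop :=
  (∀ i j : Fin n, i ≠ j → Disjoint (A i) (A j)) ∧ ∀ x : ι, ∃ i : Fin n, x ∈ A i

/-- EQx for additive objective valuations, where `G` is the set of goods and `C` the set of
chores: for all agents `i, j`, removing any good from `A j` brings `j`'s value down to at most
`i`'s value, and removing any chore from `A i` raises `i`'s value to at least `j`'s value. -/
def IsEQxObj {ι : Type*} [DecidableEq ι] {n : ℕ} (G C : Finset ι) (v : Fin n → ι → ℤ)
    (A : Fin n → Finset ι) : Prop :=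
  ∀ i j : Fin n,
    (∀ g ∈ A j ∩ G, (∑ x ∈ A j, v j x) - v j g ≤ ∑ x ∈ A i, v i x) ∧
    (∀ c ∈ A i ∩ C, (∑ x ∈ A i, v i x) - v i c ≥ ∑ x ∈ A j, v j x)

/-- The leximin++ key of an allocation: the list of triples `(value, bundle size, index)`,
one per agent, sorted in increasing lexicographic order. -/
def key {ι : Type*} {n : ℕ} (v : Fin n → ι → ℤ) (A : Fin n → Finset ι) :
    List (ℤ ×ₗ ℕ ×ₗ ℕ) :=
  ((List.finRange n).map
      (fun i => toLex ((∑ x ∈ A i, v i x), toLex (((A i).card), (i : ℕ))))).mergeSort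
    (fun a b => decide (a ≤ b))

/- ============ Auxiliary material ============ -/

/-- The triple of an agent in an allocation. -/
def trip {ι : Type*} {n : ℕ} (v : Fin n → ι → ℤ) (A : Fin n → Finset ι) (k : Fin n) :
    ℤ ×ₗ ℕ ×ₗ ℕ :=
  toLex ((∑ x ∈ A k, v k x), toLex (((A k).card), (k : ℕ)))

lemma lex_append_aux {T : Type*} [LinearOrder T] (F : List T) {a b : T} (h : a < b)
    (R R' : List T) : List.Lex (· < ·) (F ++ a :: R) (F ++ b :: R') := by
  induction F with
  | nil => exact List.Lex.rel h
  | cons x F ih => exact List.Lex.cons ih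

lemma sorted_split {T : Type*} [LinearOrder T] (a : T) (u : List T)
    (hu : u.Pairwise (· ≤ ·)) :
    u = u.filter (fun x => decide (x ≤ a)) ++ u.filter (fun x => decide (¬ x ≤ a)) := by
  induction u with
  | nil => rfl
  | cons x xs ih =>
    rw [List.pairwise_cons] at hu
    by_cases hx : x ≤ a
    · have e1 : (decide (x ≤ a)) = true := by simpa using hx
      have e2 : (decide (¬ x ≤ a)) = false := by simpa using hx
      simp only [List.filter_cons, e1, e2, if_true, Bool.false_eq_true, if_false,
        List.cons_append]
      exact congrArg (x :: ·) (ih hu.2)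
    · have hall : ∀ y ∈ x :: xs, ¬ y ≤ a := by
        intro y hy hya
        rcases List.mem_cons.mp hy with rfl | hy
        · exact hx hya
        · exact hx ((hu.1 y hy).trans hya)
      have h1 : (x :: xs).filter (fun x => decide (x ≤ a)) = [] := by
        rw [List.filter_eq_nil_iff]
        intro y hy
        simpa using hall y hy
      have h2 : (x :: xs).filter (fun x => decide (¬ x ≤ a)) = x :: xs := by
        rw [List.filter_eq_self]
        intro y hy
        simpa using hall y hy
      rw [h1, h2, List.nil_append]

lemma sorted_lex_of_filter {T : Type*} [LinearOrder T] {u w : List T}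
    (hu : u.Pairwise (· ≤ ·)) (hw : w.Pairwise (· ≤ ·)) (hlen : u.length = w.length) {a : T}
    (hperm : (u.filter (fun x => decide (x ≤ a))).Perm
      (a :: w.filter (fun x => decide (x ≤ a)))) :
    List.Lex (· < ·) u w := by
  set F := w.filter (fun x => decide (x ≤ a)) with hF
  have hmemF : ∀ x ∈ F, x ≤ a := by
    intro x hx
    have := List.of_mem_filter hx
    simpa using this
  have hsortF : (F ++ [a]).Pairwise (· ≤ ·) := by
    rw [List.pairwise_append]
    refine ⟨hw.filter _, List.pairwise_singleton _ a, ?_⟩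
    intro x hx y hy
    rw [List.mem_singleton] at hy
    exact hy ▸ hmemF x hx
  have heq : u.filter (fun x => decide (x ≤ a)) = F ++ [a] := by
    refine List.Perm.eq_of_pairwise' (hu.filter _) hsortF (hperm.trans ?_)
    exact (List.perm_append_singleton a F).symm
  have hu2 : u = (F ++ [a]) ++ u.filter (fun x => decide (¬ x ≤ a)) := by
    conv_lhs => rw [sorted_split a u hu]
    rw [heq]
  have hw2 : w = F ++ w.filter (fun x => decide (¬ x ≤ a)) := by
    conv_lhs => rw [sorted_split a w hw]
  set Ru := u.filter (fun x => decide (¬ x ≤ a))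
  set Rw := w.filter (fun x => decide (¬ x ≤ a)) with hRw
  have hlen2 : Rw.length = Ru.length + 1 := by
    have h1 : u.length = F.length + 1 + Ru.length := by
      rw [hu2]; simp; omega
    have h2 : w.length = F.length + Rw.length := by
      rw [hw2]; simp
    omega
  obtain ⟨b, t, hbt⟩ : ∃ b t, Rw = b :: t := by
    cases hRwc : Rw with
    | nil => rw [hRwc] at hlen2; simp at hlen2
    | cons b t => exact ⟨b, t, rfl⟩
  have hb : a < b := by
    have hbmem : b ∈ Rw := by rw [hbt]; exact List.mem_cons_self
    have := List.of_mem_filter hbmem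
    simp only [decide_eq_true_eq] at this
    exact lt_of_not_ge this
  rw [hu2, hw2, hbt, List.append_assoc, List.singleton_append]
  exact lex_append_aux F hb Ru t

lemma key_lt_of_swap {ι : Type*} {n : ℕ} (v : Fin n → ι → ℤ) (A B : Fin n → Finset ι)
    (p q : Fin n) (hpq : p ≠ q)
    (hrest : ∀ k : Fin n, k ≠ p → k ≠ q → B k = A k)
    (h1 : trip v A p < trip v B p) (h2 : trip v A p < trip v B q)
    (h3 : trip v A p < trip v A q) :
    List.Lex (· < ·) (key v A) (key v B) := by
  set a := trip v A p with ha
  set le : (ℤ ×ₗ ℕ ×ₗ ℕ) → (ℤ ×ₗ ℕ ×ₗ ℕ) → Bool := fun x y => decide (x ≤ y) with hle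
  have hkey : ∀ X : Fin n → Finset ι,
      key v X = ((List.finRange n).map (trip v X)).mergeSort le := fun X => rfl
  have htrans : ∀ x y z : ℤ ×ₗ ℕ ×ₗ ℕ, le x y = true → le y z = true → le x z = true := by
    intro x y z
    simp only [hle, decide_eq_true_eq]
    exact le_trans
  have htot : ∀ x y : ℤ ×ₗ ℕ ×ₗ ℕ, (le x y || le y x) = true := by
    intro x y
    simp only [hle, Bool.or_eq_true, decide_eq_true_eq]
    exact le_total x y
  have hsorted : ∀ X : Fin n → Finset ι, (key v X).Pairwise (· ≤ ·) := by
    intro X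
    rw [hkey]
    exact (List.pairwise_mergeSort htrans htot _).imp (by simp [hle])
  have hlen : (key v A).length = (key v B).length := by
    rw [hkey, hkey]
    simp
  set pred : (ℤ ×ₗ ℕ ×ₗ ℕ) → Bool := fun x => decide (x ≤ a) with hpred
  -- decompose finRange
  have hqp : q ∈ (List.finRange n).erase p :=
    (List.mem_erase_of_ne hpq.symm).mpr (List.mem_finRange q)
  have e1 : (List.finRange n).Perm (p :: q :: ((List.finRange n).erase p).erase q) :=
    (List.perm_cons_erase (List.mem_finRange p)).trans
      ((List.perm_cons_erase hqp).cons p)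
  set rest := ((List.finRange n).erase p).erase q with hrest'
  have hmemrest : ∀ k ∈ rest, k ≠ p ∧ k ≠ q := by
    intro k hk
    have hnd : ((List.finRange n).erase p).Nodup := (List.nodup_finRange n).erase p
    have h1 := (hnd.mem_erase_iff.mp hk)
    have h2 := ((List.nodup_finRange n).mem_erase_iff.mp h1.2)
    exact ⟨h2.1, h1.1⟩
  have hmap : rest.map (trip v B) = rest.map (trip v A) := by
    apply List.map_congr_left
    intro k hk
    obtain ⟨hk1, hk2⟩ := hmemrest k hk
    simp [trip, hrest k hk1 hk2]
  -- evaluate predicate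
  have pa : pred (trip v A p) = true := by simp [hpred, ha]
  have paq : pred (trip v A q) = false := by
    simp only [hpred, decide_eq_false_iff_not]
    exact not_le_of_gt h3
  have pbp : pred (trip v B p) = false := by
    simp only [hpred, decide_eq_false_iff_not]
    exact not_le_of_gt h1
  have pbq : pred (trip v B q) = false := by
    simp only [hpred, decide_eq_false_iff_not]
    exact not_le_of_gt h2
  have hfA : ((key v A).filter pred).Perm
      (a :: (((rest.map (trip v A))).filter pred)) := by
    have p1 : ((key v A).filter pred).Perm
        ((((List.finRange n).map (trip v A)).filter pred)) := by
      rw [hkey]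
      exact (List.mergeSort_perm _ _).filter pred
    have p2 : ((((List.finRange n).map (trip v A)).filter pred)).Perm
        ((((p :: q :: rest).map (trip v A)).filter pred)) := (e1.map _).filter pred
    refine (p1.trans p2).trans ?_
    simp only [List.map_cons, List.filter_cons, pa, paq, if_true, if_false]
    exact List.Perm.refl _
  have hfB : ((key v B).filter pred).Perm ((rest.map (trip v A)).filter pred) := by
    have p1 : ((key v B).filter pred).Perm
        ((((List.finRange n).map (trip v B)).filter pred)) := by
      rw [hkey]
      exact (List.mergeSort_perm _ _).filter pred
    have p2 : ((((List.finRange n).map (trip v B)).filter pred)).Perm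
        ((((p :: q :: rest).map (trip v B)).filter pred)) := (e1.map _).filter pred
    refine (p1.trans p2).trans ?_
    simp only [List.map_cons, List.filter_cons, pbp, pbq, Bool.false_eq_true, if_false]
    rw [hmap]
  exact sorted_lex_of_filter (hsorted A) (hsorted B) hlen
    (hfA.trans ((hfB.symm).cons a))

/-- Moving one item `y` from agent `s` to agent `t` preserves being an allocation. -/
lemma move_allocation {ι : Type*} [DecidableEq ι] {n : ℕ} (A : Fin n → Finset ι)
    (hA : IsAllocation A) (s t : Fin n) (hst : s ≠ t) (y : ι) (hy : y ∈ A s) :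
    IsAllocation (fun k => if k = t then insert y (A t) else if k = s then (A s).erase y
      else A k) := by
  have hd : ∀ a b : Fin n, a ≠ b → ∀ x, x ∈ A a → x ∈ A b → False := fun a b hab x h1 h2 =>
    Finset.disjoint_left.mp (hA.1 a b hab) h1 h2
  have hmem : ∀ (k : Fin n) (x : ι),
      x ∈ (if k = t then insert y (A t) else if k = s then (A s).erase y else A k) →
      (x = y ∧ k = t) ∨ (x ∈ A k ∧ (k = s → x ≠ y)) := by
    intro k x h
    split_ifs at h with h1 h2
    · rcases Finset.mem_insert.mp h with rfl | h
      · exact Or.inl ⟨rfl, h1⟩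
      · subst h1
        refine Or.inr ⟨h, fun hks => absurd hks.symm hst⟩
    · subst h2
      obtain ⟨hxy, hx⟩ := Finset.mem_erase.mp h
      exact Or.inr ⟨hx, fun _ => hxy⟩
    · exact Or.inr ⟨h, fun hks => absurd hks h2⟩
  constructor
  · intro k l hkl
    rw [Finset.disjoint_left]
    intro x hxk hxl
    have hk := hmem k x hxk
    have hl := hmem l x hxl
    rcases hk with ⟨hxy, hkt⟩ | ⟨hk, hk2⟩
    · rcases hl with ⟨hxy', hlt⟩ | ⟨hl, hl2⟩
      · exact hkl (hkt.trans hlt.symm)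
      · by_cases hls : l = s
        · exact absurd hxy (hl2 hls)
        · exact hd s l (fun h => hls h.symm) y hy (hxy ▸ hl)
    · rcases hl with ⟨hxy', hlt⟩ | ⟨hl, hl2⟩
      · by_cases hks : k = s
        · exact absurd hxy' (hk2 hks)
        · exact hd s k (fun h => hks h.symm) y hy (hxy' ▸ hk)
      · exact hd k l hkl x hk hl
  · intro x
    obtain ⟨m, hm⟩ := hA.2 x
    by_cases hxy : x = y
    · subst hxy
      exact ⟨t, by simp⟩
    · refine ⟨m, ?_⟩
      by_cases hmt : m = t
      · subst hmt
        simp [Finset.mem_insert, hm]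
      · by_cases hms : m = s
        · subst hms
          simp [hmt, Finset.mem_erase, hxy, hm]
        · simp [hmt, hms, hm]

/-- If all chores are identically valued and strictly negative, then any allocation that is
not EQx is dominated in the `≺⁺` order: there is an allocation with a strictly larger
leximin++ key. Consequently, every `≺⁺`-maximal allocation is EQx. -/
theorem leximinPlusPlus_maximal_is_eqx
    {ι : Type*} [Fintype ι] [DecidableEq ι] {n : ℕ} (hn : 0 < n)
    (G C : Finset ι) (hGC : G ∪ C = Finset.univ) (hdisj : Disjoint G C)
    (v : Fin n → ι → ℤ)
    (hG : ∀ g ∈ G, ∀ i : Fin n, 0 ≤ v i g)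
    (hident : ∀ c ∈ C, ∀ i j : Fin n, v i c = v j c)
    (hneg : ∀ c ∈ C, ∀ i : Fin n, v i c < 0)
    (A : Fin n → Finset ι) (hA : IsAllocation A) (hnot : ¬ IsEQxObj G C v A) :
    ∃ B : Fin n → Finset ι, IsAllocation B ∧ List.Lex (· < ·) (key v A) (key v B) := by
  simp only [IsEQxObj, not_forall] at hnot
  obtain ⟨i, j, hij⟩ := hnot
  rw [not_and_or] at hij
  rcases hij with h | h
  · push_neg at h
    obtain ⟨g, hgmem, hlt⟩ := h
    obtain ⟨hgA, hgG⟩ := Finset.mem_inter.mp hgmem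
    have hij2 : i ≠ j := by
      rintro rfl
      linarith [hG g hgG i]
    have hgi : g ∉ A i := fun h' => Finset.disjoint_left.mp (hA.1 i j hij2) h' hgA
    set B : Fin n → Finset ι := fun k => if k = i then insert g (A i)
      else if k = j then (A j).erase g else A k with hB
    have hBi : B i = insert g (A i) := by simp [hB]
    have hBj : B j = (A j).erase g := by simp [hB, Ne.symm hij2]
    have hsBi : ∑ x ∈ B i, v i x = v i g + ∑ x ∈ A i, v i x := by
      rw [hBi, Finset.sum_insert hgi]
    have hcBi : (B i).card = (A i).card + 1 := by
      rw [hBi, Finset.card_insert_of_notMem hgi]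
    have hsBj : ∑ x ∈ B j, v j x = ∑ x ∈ A j, v j x - v j g := by
      rw [hBj, Finset.sum_erase_eq_sub hgA]
    refine ⟨B, move_allocation A hA j i (Ne.symm hij2) g hgA, ?_⟩
    refine key_lt_of_swap v A B i j hij2 (fun k hk1 hk2 => by simp [hB, hk1, hk2]) ?_ ?_ ?_
    · simp only [trip, Prod.Lex.lt_iff, ofLex_toLex]
      rcases (hG g hgG i).lt_or_eq with h0 | h0
      · exact Or.inl (by rw [hsBi]; linarith)
      · refine Or.inr ⟨by rw [hsBi, ← h0, zero_add], Or.inl (by rw [hcBi]; omega)⟩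
    · simp only [trip, Prod.Lex.lt_iff]
      exact Or.inl (by rw [hsBj]; exact hlt)
    · simp only [trip, Prod.Lex.lt_iff, ofLex_toLex]
      exact Or.inl (by linarith [hG g hgG j])
  · push_neg at h
    obtain ⟨c, hcmem, hlt⟩ := h
    obtain ⟨hcA, hcC⟩ := Finset.mem_inter.mp hcmem
    have hij2 : i ≠ j := by
      rintro rfl
      linarith [hneg c hcC i]
    have hcj : c ∉ A j := fun h' => Finset.disjoint_left.mp (hA.1 j i (Ne.symm hij2)) h' hcA
    set B : Fin n → Finset ι := fun k => if k = j then insert c (A j)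
      else if k = i then (A i).erase c else A k with hB
    have hBj : B j = insert c (A j) := by simp [hB]
    have hBi : B i = (A i).erase c := by simp [hB, hij2]
    have hsBi : ∑ x ∈ B i, v i x = ∑ x ∈ A i, v i x - v i c := by
      rw [hBi, Finset.sum_erase_eq_sub hcA]
    have hsBj : ∑ x ∈ B j, v j x = v j c + ∑ x ∈ A j, v j x := by
      rw [hBj, Finset.sum_insert hcj]
    refine ⟨B, move_allocation A hA i j hij2 c hcA, ?_⟩
    refine key_lt_of_swap v A B i j hij2 (fun k hk1 hk2 => by simp [hB, hk1, hk2]) ?_ ?_ ?_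
    · simp only [trip, Prod.Lex.lt_iff, ofLex_toLex]
      exact Or.inl (by rw [hsBi]; linarith [hneg c hcC i])
    · simp only [trip, Prod.Lex.lt_iff, ofLex_toLex]
      have hid := hident c hcC i j
      exact Or.inl (by rw [hsBj]; linarith)
    · simp only [trip, Prod.Lex.lt_iff, ofLex_toLex]
      exact Or.inl (by linarith [hneg c hcC i])
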